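/- Every finite game has a dual vector that is both strong and full; that is, a dual vector α such that D(c,α) > 0 for every pure strategy profile c with probability zero in all correlated equilibria, and such that for all i and all c_i, d_i ∈ C_i, α_i(d_i|c_i) > 0 whenever β_i(d_i|c_i) > 0 for some dual vector β. -/

import Mathlib

open scoped BigOperators

section Prelim

variable {S : Type} [Fintype S] [DecidableEq S]

/-- `σ` is a mixed strategy (probability distribution) on the finite set `S`. -/
def IsMixed (σ : S → ℝ) : Prop := (∀ s, 0 ≤ σ s) ∧ ∑ s, σ s = 1

/-- The Dirac measure `δ_s`. -/
def dirac (s : S) : S → ℝ := fun d => if d = s then 1 else 0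

/-- `α_i * σ_i`, the image of the mixed strategy `σ` under the deviation plan `αᵢ`,
where `αᵢ c d` is the probability `αᵢ(d | c)`. -/
def devImage (αᵢ : S → S → ℝ) (σ : S → ℝ) : S → ℝ := fun d => ∑ c, σ c * αᵢ c d

/-- `σ` is `αᵢ`-stationary: `αᵢ * σ = σ`. -/
def IsStationary' (αᵢ : S → S → ℝ) (σ : S → ℝ) : Prop := devImage αᵢ σ = σ

/-- A nonempty `B ⊆ S` is `αᵢ`-absorbing if `supp (αᵢ * c) ⊆ B` for all `c ∈ B`. -/
def IsAbsorbing (αᵢ : S → S → ℝ) (B : Finset S) : Prop :=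
  B.Nonempty ∧ ∀ c ∈ B, ∀ d, 0 < αᵢ c d → d ∈ B

/-- A minimal absorbing set: an absorbing set containing no proper nonempty absorbing subset. -/
def IsMinimalAbsorbing (αᵢ : S → S → ℝ) (B : Finset S) : Prop :=
  IsAbsorbing αᵢ B ∧ ∀ B' ⊆ B, IsAbsorbing αᵢ B' → B' = B

/-- `C_i/α_i`: the set of `αᵢ`-stationary mixed strategies whose support is contained
in some minimal `αᵢ`-absorbing set. -/
def ReducedSet (αᵢ : S → S → ℝ) : Set (S → ℝ) :=
  {σ | IsMixed σ ∧ IsStationary' αᵢ σ ∧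
    ∃ B : Finset S, IsMinimalAbsorbing αᵢ B ∧ ∀ s, σ s ≠ 0 → s ∈ B}

end Prelim

section Games

variable {N : Type} [Fintype N] [DecidableEq N]
  {C : N → Type} [∀ i, Fintype (C i)] [∀ i, DecidableEq (C i)]

/-- Marginal probability of the pure strategy `cᵢ` of player `i` under `μ`. -/
def marginal (μ : (∀ j, C j) → ℝ) (i : N) (cᵢ : C i) : ℝ :=
  ∑ c : ∀ j, C j, if c i = cᵢ then μ c else 0

/-- The incentive sum `∑_{c_{-i}} μ(c_{-i},cᵢ)[U_i(c_{-i},dᵢ) − U_i(c_{-i},cᵢ)]`. -/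
def incentiveSum (U : ∀ i : N, (∀ j, C j) → ℝ) (μ : (∀ j, C j) → ℝ) (i : N) (cᵢ dᵢ : C i) : ℝ :=
  ∑ c : ∀ j, C j, if c i = cᵢ then μ c * (U i (Function.update c i dᵢ) - U i c) else 0

/-- Correlated equilibrium. -/
def IsCorrelatedEq (U : ∀ i : N, (∀ j, C j) → ℝ) (μ : (∀ j, C j) → ℝ) : Prop :=
  (∀ c, 0 ≤ μ c) ∧ (∑ c : ∀ j, C j, μ c) = 1 ∧
    ∀ (i : N) (cᵢ dᵢ : C i), incentiveSum U μ i cᵢ dᵢ ≤ 0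

/-- Multilinear extension: payoff of player `i` under the mixed strategy profile `σ`. -/
def mixedPayoff (U : ∀ i : N, (∀ j, C j) → ℝ) (σ : ∀ j, C j → ℝ) (i : N) : ℝ :=
  ∑ c : ∀ j, C j, (∏ j, σ j (c j)) * U i c

/-- Nash equilibrium. -/
def IsNash (U : ∀ i : N, (∀ j, C j) → ℝ) (σ : ∀ j, C j → ℝ) : Prop :=
  (∀ i, IsMixed (σ i)) ∧
  ∀ (i : N) (dᵢ : C i),
    mixedPayoff U (Function.update σ i (dirac dᵢ)) i ≤ mixedPayoff U σ i

/-- `D(c, α) = ∑_i [U_i(c_{-i}, α_i * c_i) − U_i(c)]`. -/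
def devGain (U : ∀ i : N, (∀ j, C j) → ℝ) (α : ∀ i, C i → C i → ℝ) (c : ∀ j, C j) : ℝ :=
  ∑ i, ((∑ dᵢ, α i (c i) dᵢ * U i (Function.update c i dᵢ)) - U i c)

/-- A dual vector: a profile of deviation plans with `D(c,α) ≥ 0` for all `c`. -/
def IsDualVector (U : ∀ i : N, (∀ j, C j) → ℝ) (α : ∀ i, C i → C i → ℝ) : Prop :=
  (∀ (i : N) (cᵢ : C i), IsMixed (α i cᵢ)) ∧ ∀ c, 0 ≤ devGain U α c

/-- A strong dual vector: `D(c,α) > 0` whenever `c` has probability zero in all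
correlated equilibria. -/
def IsStrong (U : ∀ i : N, (∀ j, C j) → ℝ) (α : ∀ i, C i → C i → ℝ) : Prop :=
  ∀ c : ∀ j, C j, (∀ μ, IsCorrelatedEq U μ → μ c = 0) → 0 < devGain U α c

/-- A full dual vector: `α_i(dᵢ|cᵢ) > 0` whenever `β_i(dᵢ|cᵢ) > 0` for some dual vector `β`. -/
def IsFull (U : ∀ i : N, (∀ j, C j) → ℝ) (α : ∀ i, C i → C i → ℝ) : Prop :=
  ∀ (i : N) (cᵢ dᵢ : C i),
    (∃ β : ∀ i, C i → C i → ℝ, IsDualVector U β ∧ 0 < β i cᵢ dᵢ) → 0 < α i cᵢ dᵢ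

end Games


namespace DualProof

section Farkas

variable {d : Type} [Fintype d]

/-- Euclidean pairing on `d → ℝ`. -/
def dot (x y : d → ℝ) : ℝ := ∑ i, x i * y i

lemma dot_sub_smul (x y : d → ℝ) (r : ℝ) (z : d → ℝ) :
    dot x (y - r • z) = dot x y - r * dot x z := by
  simp [dot, mul_sub, Finset.sum_sub_distrib, Finset.mul_sum, mul_left_comm]

lemma dot_sub_smul_left (x z w : d → ℝ) (r : ℝ) :
    dot (x - r • z) w = dot x w - r * dot z w := by
  unfold dot
  rw [Finset.mul_sum, ← Finset.sum_sub_distrib]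
  apply Finset.sum_congr rfl
  intro i _
  simp only [Pi.sub_apply, Pi.smul_apply, smul_eq_mul]
  ring

/-- Farkas' lemma, generators indexed by `Fin n`, proved by induction on `n`. -/
lemma farkas_fin : ∀ (n : ℕ) (A : Fin n → d → ℝ) (b : d → ℝ),
    (∃ μ : Fin n → ℝ, (∀ k, 0 ≤ μ k) ∧ b = ∑ k, μ k • A k) ∨
    (∃ y : d → ℝ, (∀ k, 0 ≤ dot (A k) y) ∧ dot b y < 0) := by
  intro n
  induction n with
  | zero =>
    intro A b
    by_cases hb : b = 0
    · exact Or.inl ⟨0, fun k => le_refl 0, by simp [hb]⟩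
    · refine Or.inr ⟨-b, fun k => k.elim0, ?_⟩
      have hpos : 0 < dot b b := by
        obtain ⟨i, hi⟩ := Function.ne_iff.mp hb
        exact Finset.sum_pos' (fun j _ => mul_self_nonneg _)
          ⟨i, Finset.mem_univ i, mul_self_pos.mpr hi⟩
      have : dot b (-b) = -dot b b := by simp [dot, Finset.sum_neg_distrib]
      rw [this]; linarith
  | succ n ih =>
    intro A b
    set a : d → ℝ := A 0 with ha
    set B : Fin n → d → ℝ := fun k => A k.succ with hB
    have hBk : ∀ k, A k.succ = B k := fun k => rfl
    rcases ih B b with ⟨μ, hμ, hb⟩ | ⟨y, hy, hby⟩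
    · refine Or.inl ⟨Fin.cons 0 μ, ?_, ?_⟩
      · intro k
        refine Fin.cases ?_ ?_ k
        · simp
        · intro j; simpa using hμ j
      · rw [Fin.sum_univ_succ]
        simp only [Fin.cons_zero, Fin.cons_succ, zero_smul, zero_add]
        rw [hb]
    · by_cases h0 : 0 ≤ dot a y
      · refine Or.inr ⟨y, ?_, hby⟩
        intro k
        refine Fin.cases h0 (fun j => ?_) k
        rw [hBk]; exact hy j
      · push_neg at h0
        set q := dot a y with hq
        have hq0 : q ≠ 0 := ne_of_lt h0
        set B' : Fin n → d → ℝ := fun k => B k - (dot (B k) y / q) • a with hB'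
        set b' : d → ℝ := b - (dot b y / q) • a with hb'
        rcases ih B' b' with ⟨μ, hμ, heq⟩ | ⟨y', hy', hb'y⟩
        · set μ₀ : ℝ := dot b y / q - ∑ k, μ k * (dot (B k) y / q) with hμ₀
          have hμ₀pos : 0 ≤ μ₀ := by
            rw [hμ₀]
            have h1 : 0 < dot b y / q := div_pos_of_neg_of_neg hby h0
            have h2 : ∑ k, μ k * (dot (B k) y / q) ≤ 0 := by
              apply Finset.sum_nonpos
              intro k _
              exact mul_nonpos_of_nonneg_of_nonpos (hμ k)
                (div_nonpos_of_nonneg_of_nonpos (hy k) h0.le)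
            linarith
          refine Or.inl ⟨Fin.cons μ₀ μ, ?_, ?_⟩
          · intro k
            refine Fin.cases hμ₀pos (fun j => hμ j) k
          · rw [Fin.sum_univ_succ]
            simp only [Fin.cons_zero, Fin.cons_succ]
            have hsum : ∑ x : Fin n, μ x • A x.succ = ∑ x : Fin n, μ x • B x :=
              Finset.sum_congr rfl fun k _ => by rw [hBk]
            rw [hsum, ← ha]
            have e1 : ∑ k, μ k • B' k
                = (∑ k, μ k • B k) - (∑ k, μ k * (dot (B k) y / q)) • a := by
              rw [hB']
              simp only [smul_sub, smul_smul]
              rw [Finset.sum_sub_distrib, ← Finset.sum_smul]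
            have e2 : b = b' + (dot b y / q) • a := by rw [hb']; abel
            rw [e2, heq, e1, hμ₀, sub_smul]
            abel
        · refine Or.inr ⟨y' - (dot a y' / q) • y, ?_, ?_⟩
          · intro k
            refine Fin.cases ?_ (fun j => ?_) k
            · rw [← ha, dot_sub_smul, ← hq, div_mul_cancel₀ _ hq0]
              simp
            · rw [hBk, dot_sub_smul]
              have h3 := hy' j
              rw [hB'] at h3
              simp only [] at h3
              rw [dot_sub_smul_left] at h3
              have : dot (B j) y' - dot a y' / q * dot (B j) y
                  = dot (B j) y' - dot (B j) y / q * dot a y' := by ring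
              rw [this]
              exact h3
          · rw [dot_sub_smul]
            have h4 : dot b' y' = dot b y' - (dot b y / q) * dot a y' := by
              rw [hb', dot_sub_smul_left]
            have : dot b y' - dot a y' / q * dot b y
                = dot b y' - dot b y / q * dot a y' := by ring
            rw [this, ← h4]; exact hb'y

/-- Farkas' lemma with an arbitrary finite index type. -/
lemma farkas {ι : Type} [Fintype ι] (A : ι → d → ℝ) (b : d → ℝ) :
    (∃ μ : ι → ℝ, (∀ k, 0 ≤ μ k) ∧ b = ∑ k, μ k • A k) ∨
    (∃ y : d → ℝ, (∀ k, 0 ≤ dot (A k) y) ∧ dot b y < 0) := by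
  have e := Fintype.equivFin ι
  rcases farkas_fin (Fintype.card ι) (fun k => A (e.symm k)) b with ⟨μ, hμ, hb⟩ | ⟨y, hy, hby⟩
  · left
    refine ⟨fun j => μ (e j), fun k => hμ _, ?_⟩
    rw [hb]
    exact Fintype.sum_equiv e.symm _ _ (fun k => by simp)
  · right
    exact ⟨y, fun k => by simpa using hy (e k), hby⟩

end Farkas

section GameLemmas

variable {N : Type} [Fintype N] [DecidableEq N]
  {C : N → Type} [∀ i, Fintype (C i)] [∀ i, DecidableEq (C i)]

/-- The elementary incentive vectors. -/
def E (U : ∀ i : N, (∀ j, C j) → ℝ) (t : Σ i : N, C i × C i) (c : ∀ j, C j) : ℝ :=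
  if c t.1 = t.2.1 then U t.1 (Function.update c t.1 t.2.2) - U t.1 c else 0

lemma E_diag (U : ∀ i : N, (∀ j, C j) → ℝ) (i : N) (a : C i) (c : ∀ j, C j) :
    E U ⟨i, (a, a)⟩ c = 0 := by
  unfold E
  split
  · rename_i h
    simp only at h
    rw [← h, Function.update_eq_self, sub_self]
  · rfl

lemma devGain_eq (U : ∀ i : N, (∀ j, C j) → ℝ) (α : ∀ i, C i → C i → ℝ)
    (hmix : ∀ i a, IsMixed (α i a)) (c : ∀ j, C j) :
    devGain U α c = ∑ t : Σ i : N, C i × C i, α t.1 t.2.1 t.2.2 * E U t c := by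
  have hsig : (∑ t : Σ i : N, C i × C i, α t.1 t.2.1 t.2.2 * E U t c)
      = ∑ i, ∑ p : C i × C i, α i p.1 p.2 * E U ⟨i, p⟩ c := by
    rw [← Finset.univ_sigma_univ, Finset.sum_sigma]
  rw [hsig]
  unfold devGain
  apply Finset.sum_congr rfl
  intro i _
  rw [Fintype.sum_prod_type]
  have h1 : ∀ a : C i, (∑ b, α i a b * E U ⟨i, (a, b)⟩ c)
      = if c i = a then ∑ b, α i a b * (U i (Function.update c i b) - U i c) else 0 := by
    intro a
    by_cases h : c i = a
    · simp [E, h]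
    · simp [E, h]
  calc (∑ b, α i (c i) b * U i (Function.update c i b)) - U i c
      = ∑ b, α i (c i) b * (U i (Function.update c i b) - U i c) := by
        simp only [mul_sub, Finset.sum_sub_distrib, ← Finset.sum_mul, (hmix i (c i)).2, one_mul]
    _ = ∑ a, if c i = a then ∑ b, α i a b * (U i (Function.update c i b) - U i c) else 0 := by
        rw [Finset.sum_ite_eq]
        simp
    _ = ∑ a, ∑ b, α i a b * E U ⟨i, (a, b)⟩ c :=
        Finset.sum_congr rfl fun a _ => (h1 a).symm

lemma incentive_eq (U : ∀ i : N, (∀ j, C j) → ℝ) (μ : (∀ j, C j) → ℝ) (i : N) (a b : C i) :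
    incentiveSum U μ i a b = ∑ c, μ c * E U ⟨i, (a, b)⟩ c := by
  unfold incentiveSum
  apply Finset.sum_congr rfl
  intro c _
  by_cases h : c i = a <;> simp [E, h]

/-- The identity deviation plan. -/
def idPlan : ∀ i : N, C i → C i → ℝ := fun _ a b => if b = a then 1 else 0

lemma idPlan_mixed : ∀ (i : N) (a : C i), IsMixed (idPlan (C := C) i a) := by
  intro i a
  constructor
  · intro b
    unfold idPlan
    split <;> norm_num
  · simp [idPlan, Finset.sum_ite_eq']

lemma idPlan_dual (U : ∀ i : N, (∀ j, C j) → ℝ) : IsDualVector U idPlan := by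
  refine ⟨idPlan_mixed, fun c => ?_⟩
  have : devGain U idPlan c = 0 := by
    simp [devGain, idPlan, ite_mul, Finset.sum_ite_eq', Function.update_eq_self]
  rw [this]

/-- From a nonnegative Farkas multiplier one builds a genuine deviation-plan
profile whose gain is a positive multiple of the combination. -/
lemma dual_of_y (U : ∀ i : N, (∀ j, C j) → ℝ) (y : (Σ i : N, C i × C i) → ℝ)
    (hy : ∀ t, 0 ≤ y t) :
    ∃ α : ∀ i, C i → C i → ℝ, (∀ i a, IsMixed (α i a)) ∧
      ∀ c, devGain U α c = (∑ t, y t * E U t c) / (1 + ∑ t, y t) := by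
  set M : ℝ := 1 + ∑ t, y t with hMdef
  have hM : 0 < M := by
    have : (0:ℝ) ≤ ∑ t, y t := Finset.sum_nonneg fun t _ => hy t
    rw [hMdef]; linarith
  have hrow : ∀ (i : N) (a : C i), (∑ b, y ⟨i, (a, b)⟩) ≤ ∑ t, y t := by
    intro i a
    have h1 : (∑ t : Σ i : N, C i × C i, y t) = ∑ i, ∑ p : C i × C i, y ⟨i, p⟩ := by
      rw [← Finset.univ_sigma_univ, Finset.sum_sigma]
    rw [h1]
    have h2 : (∑ b, y ⟨i, (a, b)⟩) ≤ ∑ p : C i × C i, y ⟨i, p⟩ := by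
      rw [Fintype.sum_prod_type]
      exact Finset.single_le_sum (f := fun a' => ∑ b, y ⟨i, (a', b)⟩)
        (fun a' _ => Finset.sum_nonneg fun b _ => hy _) (Finset.mem_univ a)
    exact le_trans h2 (Finset.single_le_sum (f := fun i' => ∑ p : C i' × C i', y ⟨i', p⟩)
      (fun i' _ => Finset.sum_nonneg fun p _ => hy _) (Finset.mem_univ i))
  set α : ∀ i, C i → C i → ℝ := fun i a b =>
    y ⟨i, (a, b)⟩ / M + (1 - (∑ b', y ⟨i, (a, b')⟩) / M) * (if b = a then 1 else 0) with hα
  have hcoef : ∀ (i : N) (a : C i), 0 ≤ 1 - (∑ b', y ⟨i, (a, b')⟩) / M := by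
    intro i a
    rw [sub_nonneg, div_le_one hM, hMdef]
    linarith [hrow i a]
  have hmix : ∀ (i : N) (a : C i), IsMixed (α i a) := by
    intro i a
    constructor
    · intro b
      apply add_nonneg (div_nonneg (hy _) hM.le)
      apply mul_nonneg (hcoef i a)
      split <;> norm_num
    · rw [hα]
      simp only []
      rw [Finset.sum_add_distrib, ← Finset.sum_div, ← Finset.mul_sum]
      rw [Finset.sum_ite_eq' Finset.univ a (fun _ => (1:ℝ))]
      simp only [Finset.mem_univ, if_true, mul_one]
      ring
  refine ⟨α, hmix, fun c => ?_⟩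
  rw [devGain_eq U α hmix c]
  have hzero : ∀ t : Σ i : N, C i × C i,
      (1 - (∑ b', y ⟨t.1, (t.2.1, b')⟩) / M) * (if t.2.2 = t.2.1 then 1 else 0) * E U t c
        = 0 := by
    rintro ⟨i, a, b⟩
    by_cases h : b = a
    · subst h
      simp only [if_pos rfl, mul_one]
      rw [E_diag, mul_zero]
    · simp [h]
  have hterm : ∀ t : Σ i : N, C i × C i,
      α t.1 t.2.1 t.2.2 * E U t c = y t * E U t c / M
        + (1 - (∑ b', y ⟨t.1, (t.2.1, b')⟩) / M) * (if t.2.2 = t.2.1 then 1 else 0)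
            * E U t c := by
    rintro ⟨i, a, b⟩
    rw [hα]
    simp only []
    ring
  rw [Finset.sum_congr rfl fun t _ => hterm t, Finset.sum_add_distrib,
    Finset.sum_eq_zero fun t _ => hzero t, add_zero, ← Finset.sum_div]

/-- If `c₀` is null in every correlated equilibrium, there is a dual vector with strictly
positive gain at `c₀`.  (The Farkas alternative.) -/
lemma exists_dual_strong_at (U : ∀ i : N, (∀ j, C j) → ℝ) (c₀ : ∀ j, C j)
    (h : ∀ μ, IsCorrelatedEq U μ → μ c₀ = 0) :
    ∃ α, IsDualVector U α ∧ 0 < devGain U α c₀ := by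
  classical
  set A : ((Σ i : N, C i × C i) ⊕ (∀ j, C j)) → (∀ j, C j) → ℝ := fun k =>
    match k with
    | .inl t => E U t
    | .inr c => fun c' => -(if c' = c then 1 else 0)
  set b : (∀ j, C j) → ℝ := fun c' => if c' = c₀ then 1 else 0 with hbdef
  rcases farkas A b with ⟨μ, hμ, hb⟩ | ⟨y, hy, hby⟩
  · -- the dual side gives the desired dual vector
    set z : (Σ i : N, C i × C i) → ℝ := fun t => μ (Sum.inl t) with hz
    have key : ∀ c, (∑ t, z t * E U t c) = b c + μ (Sum.inr c) := by
      intro c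
      have h0 := congrFun hb c
      rw [Finset.sum_apply] at h0
      rw [Fintype.sum_sum_type] at h0
      have h1 : (∑ c' : ∀ j, C j, (μ (Sum.inr c') • A (Sum.inr c')) c)
          = -μ (Sum.inr c) := by
        have : ∀ c' : ∀ j, C j, (μ (Sum.inr c') • A (Sum.inr c')) c
            = -(if c = c' then μ (Sum.inr c') else 0) := by
          intro c'
          simp only [Pi.smul_apply, smul_eq_mul, A]
          by_cases hcc : c = c' <;> simp [hcc]
        rw [Finset.sum_congr rfl fun c' _ => this c', Finset.sum_neg_distrib,
          Finset.sum_ite_eq]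
        simp
      have h2 : (∑ t : Σ i : N, C i × C i, (μ (Sum.inl t) • A (Sum.inl t)) c)
          = ∑ t, z t * E U t c := by
        apply Finset.sum_congr rfl
        intro t _
        simp [A, hz]
      rw [h1, h2] at h0
      linarith [h0]
    obtain ⟨α, hmix, hdev⟩ := dual_of_y U z (fun t => hμ _)
    have hM : (0:ℝ) < 1 + ∑ t, z t := by
      have : (0:ℝ) ≤ ∑ t, z t := Finset.sum_nonneg fun t _ => hμ _
      linarith
    have hbnn : ∀ c, 0 ≤ b c := by
      intro c; rw [hbdef]; simp only []; split <;> norm_num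
    refine ⟨α, ⟨hmix, fun c => ?_⟩, ?_⟩
    · rw [hdev c]
      apply div_nonneg _ hM.le
      rw [key c]
      exact add_nonneg (hbnn c) (hμ _)
    · rw [hdev c₀]
      apply div_pos _ hM
      rw [key c₀]
      have : b c₀ = 1 := by rw [hbdef]; simp
      rw [this]
      have := hμ (Sum.inr c₀)
      linarith
  · -- the primal side gives a correlated equilibrium with positive mass at c₀, contradiction
    exfalso
    have hyle : ∀ c, y c ≤ 0 := by
      intro c
      have h0 := hy (Sum.inr c)
      have : dot (A (Sum.inr c)) y = -y c := by
        simp only [dot, A, neg_mul, ite_mul, one_mul, zero_mul]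
        rw [Finset.sum_neg_distrib]
        congr 1
        rw [Finset.sum_ite_eq' Finset.univ c y]
        simp
      rw [this] at h0
      linarith
    have hyc₀ : y c₀ < 0 := by
      have : dot b y = y c₀ := by
        simp only [dot, b, ite_mul, one_mul, zero_mul]
        rw [Finset.sum_ite_eq' Finset.univ c₀ y]
        simp
      rw [this] at hby
      exact hby
    set S : ℝ := ∑ c, -y c with hS
    have hSpos : 0 < S := by
      have h1 : -y c₀ ≤ S :=
        Finset.single_le_sum (f := fun c => -y c)
          (fun c _ => neg_nonneg.mpr (hyle c)) (Finset.mem_univ c₀)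
      linarith
    set μ : (∀ j, C j) → ℝ := fun c => -y c / S with hμdef
    have hCE : IsCorrelatedEq U μ := by
      refine ⟨fun c => div_nonneg (neg_nonneg.mpr (hyle c)) hSpos.le, ?_, ?_⟩
      · rw [hμdef]
        simp only []
        rw [← Finset.sum_div, ← hS, div_self hSpos.ne']
      · intro i a b'
        rw [incentive_eq]
        have h2 := hy (Sum.inl ⟨i, (a, b')⟩)
        have h3 : dot (A (Sum.inl ⟨i, (a, b')⟩)) y = ∑ c, E U ⟨i, (a, b')⟩ c * y c := rfl
        rw [h3] at h2
        have h4 : (∑ c, μ c * E U ⟨i, (a, b')⟩ c)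
            = -(∑ c, E U ⟨i, (a, b')⟩ c * y c) / S := by
          rw [← Finset.sum_neg_distrib, Finset.sum_div]
          apply Finset.sum_congr rfl
          intro c _
          rw [hμdef]
          simp only []
          ring
        rw [h4]
        apply div_nonpos_of_nonpos_of_nonneg _ hSpos.le
        linarith
    have h5 := h μ hCE
    have h6 : 0 < μ c₀ := by
      rw [hμdef]
      exact div_pos (neg_pos.mpr hyc₀) hSpos
    rw [h5] at h6
    exact lt_irrefl 0 h6

end GameLemmas

end DualProof

set_option maxHeartbeats 1000000 in
/-- Every finite game has a dual vector that is both strong and full. -/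
theorem exists_strong_full_dual_vector
    {N : Type} [Fintype N] [DecidableEq N] [Nonempty N]
    {C : N → Type} [∀ i, Fintype (C i)] [∀ i, DecidableEq (C i)] [∀ i, Nonempty (C i)]
    (U : ∀ i : N, (∀ j, C j) → ℝ) :
    ∃ α : ∀ i, C i → C i → ℝ, IsDualVector U α ∧ IsStrong U α ∧ IsFull U α := by
  classical
  have pick1 : ∀ c₀ : ∀ j, C j, ∃ α, IsDualVector U α ∧
      ((∀ μ, IsCorrelatedEq U μ → μ c₀ = 0) → 0 < devGain U α c₀) := by
    intro c₀
    by_cases h : ∀ μ, IsCorrelatedEq U μ → μ c₀ = 0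
    · obtain ⟨α, hd, hs⟩ := DualProof.exists_dual_strong_at U c₀ h
      exact ⟨α, hd, fun _ => hs⟩
    · exact ⟨DualProof.idPlan, DualProof.idPlan_dual U, fun hh => absurd hh h⟩
  have pick2 : ∀ t : Σ i : N, C i × C i, ∃ α, IsDualVector U α ∧
      ((∃ β : ∀ i, C i → C i → ℝ, IsDualVector U β ∧ 0 < β t.1 t.2.1 t.2.2) →
        0 < α t.1 t.2.1 t.2.2) := by
    intro t
    by_cases h : ∃ β : ∀ i, C i → C i → ℝ, IsDualVector U β ∧ 0 < β t.1 t.2.1 t.2.2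
    · obtain ⟨β, hβ, hpos⟩ := h
      exact ⟨β, hβ, fun _ => hpos⟩
    · exact ⟨DualProof.idPlan, DualProof.idPlan_dual U, fun hh => absurd hh h⟩
  choose F1 hF1d hF1s using pick1
  choose F2 hF2d hF2f using pick2
  set F : ((∀ j, C j) ⊕ (Σ i : N, C i × C i)) → ∀ i, C i → C i → ℝ := fun j =>
    match j with
    | .inl c => F1 c
    | .inr t => F2 t
    with hF
  have hFd : ∀ j, IsDualVector U (F j) := by
    rintro (c | t)
    · exact hF1d c
    · exact hF2d t
  have hJne : Nonempty ((∀ j, C j) ⊕ (Σ i : N, C i × C i)) := ⟨Sum.inl (Classical.arbitrary _)⟩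
  set K : ℝ := (Fintype.card ((∀ j, C j) ⊕ (Σ i : N, C i × C i)) : ℝ) with hK
  have hKpos : 0 < K := by
    rw [hK]
    exact_mod_cast Fintype.card_pos
  set α : ∀ i, C i → C i → ℝ := fun i a b => (∑ j, F j i a b) / K with hαdef
  have hmix : ∀ (i : N) (a : C i), IsMixed (α i a) := by
    intro i a
    constructor
    · intro b
      apply div_nonneg _ hKpos.le
      exact Finset.sum_nonneg fun j _ => ((hFd j).1 i a).1 b
    · rw [hαdef]
      simp only []
      rw [← Finset.sum_div, Finset.sum_comm]
      rw [Finset.sum_congr rfl fun j (_ : j ∈ Finset.univ) => ((hFd j).1 i a).2]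
      rw [Finset.sum_const, nsmul_eq_mul, mul_one, hK]
      exact div_self (by exact_mod_cast Fintype.card_ne_zero)
  have hdev : ∀ c, devGain U α c = (∑ j, devGain U (F j) c) / K := by
    intro c
    rw [DualProof.devGain_eq U α hmix c]
    have h1 : ∀ t : Σ i : N, C i × C i,
        α t.1 t.2.1 t.2.2 * DualProof.E U t c
          = (∑ j, F j t.1 t.2.1 t.2.2 * DualProof.E U t c) / K := by
      intro t
      rw [hαdef]
      simp only []
      rw [div_mul_eq_mul_div, Finset.sum_mul]
    rw [Finset.sum_congr rfl fun t _ => h1 t, ← Finset.sum_div, Finset.sum_comm]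
    congr 1
    exact Finset.sum_congr rfl fun j _ => (DualProof.devGain_eq U (F j) (hFd j).1 c).symm
  refine ⟨α, ⟨hmix, fun c => ?_⟩, ?_, ?_⟩
  · rw [hdev c]
    apply div_nonneg _ hKpos.le
    exact Finset.sum_nonneg fun j _ => (hFd j).2 c
  · intro c₀ hc₀
    rw [hdev c₀]
    apply div_pos _ hKpos
    have h1 : 0 < devGain U (F (Sum.inl c₀)) c₀ := hF1s c₀ hc₀
    exact lt_of_lt_of_le h1
      (Finset.single_le_sum (f := fun j => devGain U (F j) c₀)
        (fun j _ => (hFd j).2 c₀) (Finset.mem_univ (Sum.inl c₀)))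
  · intro i a b hb
    have h1 : 0 < F (Sum.inr ⟨i, (a, b)⟩) i a b := hF2f ⟨i, (a, b)⟩ hb
    show 0 < (∑ j, F j i a b) / K
    apply div_pos _ hKpos
    exact lt_of_lt_of_le h1
      (Finset.single_le_sum (f := fun j => F j i a b)
        (fun j _ => ((hFd j).1 i a).1 b) (Finset.mem_univ (Sum.inr ⟨i, (a, b)⟩)))
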